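/- For every t ∈ ℝ there exists a constant C_t ≥ 1 such that for all k ∈ ℕ and x ∈ ℝ, |d^k/dx^k (1+x²)^{t/2}| ≤ C_t · 2^{3k} · k! · (1+x²)^{(t-k)/2}. -/

import Mathlib

open Polynomial Finset

noncomputable def pkAux (t : ℝ) : ℕ → Polynomial ℝ
  | 0 => 1
  | (k+1) => (pkAux t k).derivative + (pkAux t k).derivative * X ^ 2
      + C (t - 2 * k) * ((pkAux t k) * X)

lemma pkAux_coeff_zero (t : ℝ) : ∀ k m : ℕ, k < m → (pkAux t k).coeff m = 0 := by
  intro k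
  induction k with
  | zero => intro m hm; rw [pkAux, coeff_one, if_neg (by omega : ¬ m = 0)]
  | succ k ih =>
    intro m hm
    have h1 : (pkAux t k).derivative.coeff m = 0 := by
      rw [coeff_derivative, ih (m+1) (by omega)]; ring
    have h2 : ((pkAux t k).derivative * X ^ 2).coeff m = 0 := by
      rw [coeff_mul_X_pow']
      split
      · rw [coeff_derivative, ih (m - 2 + 1) (by omega)]; ring
      · rfl
    have h3 : ((pkAux t k) * X).coeff m = 0 := by
      have : (pkAux t k) * X = (pkAux t k) * X ^ 1 := by ring
      rw [this, coeff_mul_X_pow']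
      split
      · exact ih (m - 1) (by omega)
      · rfl
    simp only [pkAux, coeff_add, coeff_C_mul, h1, h2, h3]; ring

lemma pkAux_repr (t : ℝ) : ∀ (k : ℕ) (x : ℝ),
    iteratedDeriv k (fun y : ℝ => (1 + y ^ 2) ^ (t / 2)) x
      = (pkAux t k).eval x * (1 + x ^ 2) ^ (t / 2 - k) := by
  intro k
  induction k with
  | zero => intro x; simp [pkAux]
  | succ k ih =>
    intro x
    rw [iteratedDeriv_succ, funext ih]
    have hpos : (0:ℝ) < 1 + x ^ 2 := by positivity
    have hx : HasDerivAt (fun y : ℝ => 1 + y ^ 2) (2 * x) x := by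
      simpa using ((hasDerivAt_pow 2 x).const_add 1)
    have h2 : HasDerivAt (fun y : ℝ => (1 + y ^ 2) ^ (t / 2 - k))
        ((t / 2 - k) * (1 + x ^ 2) ^ (t / 2 - k - 1) * (2 * x)) x := by
      exact (Real.hasDerivAt_rpow_const (p := t / 2 - k) (Or.inl hpos.ne')).comp x hx
    have h1 : HasDerivAt (fun y : ℝ => (pkAux t k).eval y)
        ((pkAux t k).derivative.eval x) x := (pkAux t k).hasDerivAt x
    have h3 : deriv (fun y : ℝ => (pkAux t k).eval y * (1 + y ^ 2) ^ (t / 2 - k)) x = _ :=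
      (h1.mul h2).deriv
    rw [h3]
    have hsplit : (1 + x ^ 2) ^ (t / 2 - k)
        = (1 + x ^ 2) * (1 + x ^ 2) ^ (t / 2 - k - 1) := by
      have h := Real.rpow_add hpos 1 (t / 2 - k - 1)
      rw [Real.rpow_one, show (1:ℝ) + (t / 2 - k - 1) = t / 2 - k by ring] at h
      exact h
    rw [hsplit]
    push_cast
    simp only [pkAux, eval_add, eval_mul, eval_C, eval_pow, eval_X]
    ring

lemma pkAux_sum_nonneg (t : ℝ) (k : ℕ) :
    0 ≤ ∑ j ∈ range (k + 1), |(pkAux t k).coeff j| :=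
  Finset.sum_nonneg fun _ _ => abs_nonneg _

lemma pkAux_der_sum (t : ℝ) (k : ℕ) :
    ∑ j ∈ range k, |(pkAux t k).derivative.coeff j|
      ≤ k * ∑ j ∈ range (k + 1), |(pkAux t k).coeff j| := by
  have h1 : ∀ j ∈ range k, |(pkAux t k).derivative.coeff j|
      ≤ k * |(pkAux t k).coeff (j + 1)| := by
    intro j hj
    rw [coeff_derivative, abs_mul, abs_of_nonneg (by positivity : (0:ℝ) ≤ (j:ℝ) + 1),
      mul_comm ((k:ℝ))]
    have hj' : (j : ℝ) + 1 ≤ k := by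
      have := mem_range.mp hj; exact_mod_cast Nat.succ_le_of_lt this
    exact mul_le_mul_of_nonneg_left hj' (abs_nonneg _)
  calc ∑ j ∈ range k, |(pkAux t k).derivative.coeff j|
      ≤ ∑ j ∈ range k, (k:ℝ) * |(pkAux t k).coeff (j + 1)| := Finset.sum_le_sum h1
    _ = k * ∑ j ∈ range k, |(pkAux t k).coeff (j + 1)| := by rw [Finset.mul_sum]
    _ ≤ k * ∑ j ∈ range (k + 1), |(pkAux t k).coeff j| := by
        apply mul_le_mul_of_nonneg_left _ (by positivity)
        rw [Finset.sum_range_succ']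
        simp [abs_nonneg]

lemma pkAux_sum_rec (t : ℝ) (k : ℕ) :
    ∑ j ∈ range (k + 2), |(pkAux t (k + 1)).coeff j|
      ≤ (|t| + 4 * k + 4) * ∑ j ∈ range (k + 1), |(pkAux t k).coeff j| := by
  set p := pkAux t k with hp
  set A := ∑ j ∈ range (k + 1), |p.coeff j| with hA
  have hA0 : 0 ≤ A := pkAux_sum_nonneg t k
  -- termwise bound
  have hterm : ∀ j, |(pkAux t (k + 1)).coeff j|
      ≤ |p.derivative.coeff j| + |(p.derivative * X ^ 2).coeff j|
        + (|t| + 2 * k) * |(p * X).coeff j| := by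
    intro j
    have : (pkAux t (k + 1)).coeff j
        = p.derivative.coeff j + (p.derivative * X ^ 2).coeff j
          + (t - 2 * k) * (p * X).coeff j := by
      simp only [pkAux, coeff_add, coeff_C_mul, ← hp]
    rw [this]
    have h1 := abs_add_le (p.derivative.coeff j + (p.derivative * X ^ 2).coeff j)
      ((t - 2 * k) * (p * X).coeff j)
    have h2 := abs_add_le (p.derivative.coeff j) ((p.derivative * X ^ 2).coeff j)
    have h3 : |(t - 2 * (k:ℝ)) * (p * X).coeff j| ≤ (|t| + 2 * k) * |(p * X).coeff j| := by
      rw [abs_mul]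
      apply mul_le_mul_of_nonneg_right _ (abs_nonneg _)
      calc |t - 2 * (k:ℝ)| ≤ |t| + |2 * (k:ℝ)| := abs_sub _ _
        _ = |t| + 2 * k := by rw [abs_of_nonneg (by positivity : (0:ℝ) ≤ 2 * (k:ℝ))]
    linarith
  -- sum of T1
  have hT1 : ∑ j ∈ range (k + 2), |p.derivative.coeff j| ≤ k * A := by
    rw [Finset.sum_range_succ, Finset.sum_range_succ]
    have z1 : p.derivative.coeff k = 0 := by
      rw [coeff_derivative, pkAux_coeff_zero t k (k + 1) (by omega)]; ring
    have z2 : p.derivative.coeff (k + 1) = 0 := by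
      rw [coeff_derivative, pkAux_coeff_zero t k (k + 2) (by omega)]; ring
    rw [z1, z2]
    simpa using pkAux_der_sum t k
  -- sum of T2
  have hT2 : ∑ j ∈ range (k + 2), |(p.derivative * X ^ 2).coeff j| ≤ k * A := by
    rw [Finset.sum_range_succ', Finset.sum_range_succ']
    have z0 : |(p.derivative * X ^ 2).coeff 0| = 0 := by
      rw [coeff_mul_X_pow', if_neg (by omega)]; simp
    have z1 : |(p.derivative * X ^ 2).coeff (0 + 1)| = 0 := by
      rw [coeff_mul_X_pow', if_neg (by omega)]; simp
    rw [z0, z1]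
    have he : ∀ j ∈ range k, |(p.derivative * X ^ 2).coeff (j + 1 + 1)|
        = |p.derivative.coeff j| := by
      intro j _
      rw [coeff_mul_X_pow', if_pos (by omega)]
      congr 1
    rw [Finset.sum_congr rfl he]
    simpa using pkAux_der_sum t k
  -- sum of T3
  have hT3 : ∑ j ∈ range (k + 2), |(p * X).coeff j| = A := by
    rw [Finset.sum_range_succ']
    have z0 : |(p * X).coeff 0| = 0 := by
      rw [show (X : ℝ[X]) = X ^ 1 by ring, coeff_mul_X_pow', if_neg (by omega)]; simp
    rw [z0]
    have he : ∀ j ∈ range (k + 1), |(p * X).coeff (j + 1)| = |p.coeff j| := by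
      intro j _
      rw [show (X : ℝ[X]) = X ^ 1 by ring, coeff_mul_X_pow', if_pos (by omega)]
      congr 1
    rw [Finset.sum_congr rfl he, add_zero]
  calc ∑ j ∈ range (k + 2), |(pkAux t (k + 1)).coeff j|
      ≤ ∑ j ∈ range (k + 2), (|p.derivative.coeff j| + |(p.derivative * X ^ 2).coeff j|
          + (|t| + 2 * k) * |(p * X).coeff j|) :=
        Finset.sum_le_sum fun j _ => hterm j
    _ = (∑ j ∈ range (k + 2), |p.derivative.coeff j|)
        + (∑ j ∈ range (k + 2), |(p.derivative * X ^ 2).coeff j|)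
        + (|t| + 2 * k) * ∑ j ∈ range (k + 2), |(p * X).coeff j| := by
          rw [Finset.sum_add_distrib, Finset.sum_add_distrib, Finset.mul_sum]
    _ ≤ k * A + k * A + (|t| + 2 * k) * A := by
        have ht : (0:ℝ) ≤ |t| + 2 * k := by positivity
        have := mul_le_mul_of_nonneg_left (le_of_eq hT3) ht
        rw [hT3]
        linarith [hT1, hT2]
    _ ≤ (|t| + 4 * k + 4) * A := by nlinarith [abs_nonneg t, hA0]

lemma factorial_add_le (m k : ℕ) :
    ((m + k).factorial : ℝ) ≤ 2 ^ (m + k) * m.factorial * k.factorial := by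
  have h1 : (m + k).choose k ≤ 2 ^ (m + k) := by
    calc (m + k).choose k ≤ ∑ i ∈ range (m + k + 1), (m + k).choose i :=
          Finset.single_le_sum (f := fun i => (m + k).choose i)
            (fun i _ => Nat.zero_le _) (mem_range.mpr (by omega))
      _ = 2 ^ (m + k) := Nat.sum_range_choose (m + k)
  have h2 : (m + k).choose k * m.factorial * k.factorial = (m + k).factorial :=
    Nat.add_choose_mul_factorial_mul_factorial m k
  have : (m + k).factorial ≤ 2 ^ (m + k) * m.factorial * k.factorial := by
    rw [← h2]
    exact Nat.mul_le_mul_right _ (Nat.mul_le_mul_right _ h1)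
  exact_mod_cast this

lemma pkAux_sum_bound (t : ℝ) (k : ℕ) :
    ∑ j ∈ range (k + 1), |(pkAux t k).coeff j|
      ≤ 2 ^ (Nat.ceil |t|) * 8 ^ k * (Nat.factorial k : ℝ) := by
  set M := Nat.ceil |t| with hM
  have hMfac : (0:ℝ) < (M.factorial : ℝ) := by exact_mod_cast M.factorial_pos
  have key : ∀ k : ℕ, ∑ j ∈ range (k + 1), |(pkAux t k).coeff j|
      ≤ 4 ^ k * ((M + k).factorial : ℝ) / (M.factorial : ℝ) := by
    intro k
    induction k with
    | zero =>
      simp [pkAux, div_self hMfac.ne']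
    | succ k ih =>
      have hrec := pkAux_sum_rec t k
      have hfac : (|t| + 4 * k + 4) ≤ 4 * ((M:ℝ) + k + 1) := by
        have := Nat.le_ceil |t|

        nlinarith [this]
      calc ∑ j ∈ range (k + 2), |(pkAux t (k + 1)).coeff j|
          ≤ (|t| + 4 * k + 4) * ∑ j ∈ range (k + 1), |(pkAux t k).coeff j| := hrec
        _ ≤ (4 * ((M:ℝ) + k + 1)) * (4 ^ k * ((M + k).factorial : ℝ) / (M.factorial : ℝ)) := by
            apply mul_le_mul hfac ih (pkAux_sum_nonneg t k) (by positivity)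
        _ = 4 ^ (k + 1) * (((M:ℝ) + k + 1) * ((M + k).factorial : ℝ)) / (M.factorial : ℝ) := by
            ring
        _ = 4 ^ (k + 1) * (((M + (k + 1)).factorial : ℝ)) / (M.factorial : ℝ) := by
            congr 2
            have : (M + (k + 1)).factorial = (M + k + 1) * (M + k).factorial := by
              rw [show M + (k + 1) = (M + k) + 1 by omega, Nat.factorial_succ]
            rw [this]
            push_cast
            ring
  calc ∑ j ∈ range (k + 1), |(pkAux t k).coeff j|
      ≤ 4 ^ k * ((M + k).factorial : ℝ) / (M.factorial : ℝ) := key k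
    _ ≤ 4 ^ k * (2 ^ (M + k) * M.factorial * k.factorial) / (M.factorial : ℝ) := by
        gcongr
        exact factorial_add_le M k
    _ = 2 ^ M * 8 ^ k * (Nat.factorial k : ℝ) := by
        field_simp
        rw [pow_add, show (8:ℝ) ^ k = 2 ^ k * 4 ^ k by rw [← mul_pow]; norm_num]
        ring

lemma pkAux_eval_le (t : ℝ) (k : ℕ) (x : ℝ) :
    |(pkAux t k).eval x|
      ≤ (∑ j ∈ range (k + 1), |(pkAux t k).coeff j|) * (1 + x ^ 2) ^ ((k : ℝ) / 2) := by
  have hdeg : (pkAux t k).natDegree < k + 1 := by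
    have : (pkAux t k).natDegree ≤ k :=
      natDegree_le_iff_coeff_eq_zero.mpr fun N hN => pkAux_coeff_zero t k N hN
    omega
  have hb : (1:ℝ) ≤ 1 + x ^ 2 := by nlinarith [sq_nonneg x]
  have hxpow : ∀ j ∈ range (k + 1), |x| ^ j ≤ (1 + x ^ 2) ^ ((k : ℝ) / 2) := by
    intro j hj
    have h1 : |x| ≤ Real.sqrt (1 + x ^ 2) := by
      rw [show (1:ℝ) + x ^ 2 = x ^ 2 + 1 by ring]
      exact Real.abs_le_sqrt (by nlinarith [sq_nonneg x])
    have h2 : |x| ^ j ≤ Real.sqrt (1 + x ^ 2) ^ j :=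
      pow_le_pow_left₀ (abs_nonneg x) h1 j
    have h3 : Real.sqrt (1 + x ^ 2) ^ j = (1 + x ^ 2) ^ ((j : ℝ) / 2) := by
      rw [Real.sqrt_eq_rpow, ← Real.rpow_natCast ((1 + x ^ 2) ^ ((1:ℝ)/2)) j,
        ← Real.rpow_mul (by positivity)]
      congr 1
      ring
    have h4 : (1 + x ^ 2) ^ ((j : ℝ) / 2) ≤ (1 + x ^ 2) ^ ((k : ℝ) / 2) := by
      apply Real.rpow_le_rpow_of_exponent_le hb
      have : j ≤ k := by have := mem_range.mp hj; omega
      have : (j : ℝ) ≤ k := by exact_mod_cast this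
      linarith
    calc |x| ^ j ≤ Real.sqrt (1 + x ^ 2) ^ j := h2
      _ = (1 + x ^ 2) ^ ((j : ℝ) / 2) := h3
      _ ≤ (1 + x ^ 2) ^ ((k : ℝ) / 2) := h4
  rw [eval_eq_sum_range' hdeg]
  calc |∑ j ∈ range (k + 1), (pkAux t k).coeff j * x ^ j|
      ≤ ∑ j ∈ range (k + 1), |(pkAux t k).coeff j * x ^ j| := Finset.abs_sum_le_sum_abs _ _
    _ ≤ ∑ j ∈ range (k + 1), |(pkAux t k).coeff j| * (1 + x ^ 2) ^ ((k : ℝ) / 2) := by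
        apply Finset.sum_le_sum
        intro j hj
        rw [abs_mul, abs_pow]
        exact mul_le_mul_of_nonneg_left (hxpow j hj) (abs_nonneg _)
    _ = (∑ j ∈ range (k + 1), |(pkAux t k).coeff j|) * (1 + x ^ 2) ^ ((k : ℝ) / 2) := by
        rw [← Finset.sum_mul]

theorem bracket_derivative_bound (t : ℝ) :
    ∃ C : ℝ, 1 ≤ C ∧
      ∀ (k : ℕ) (x : ℝ),
        |iteratedDeriv k (fun y : ℝ => (1 + y ^ 2) ^ (t / 2)) x|
          ≤ C * 2 ^ (3 * k) * (Nat.factorial k : ℝ) * (1 + x ^ 2) ^ ((t - k) / 2) := by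
  refine ⟨2 ^ (Nat.ceil |t|), one_le_pow₀ (by norm_num), ?_⟩
  intro k x
  have hpos : (0:ℝ) < 1 + x ^ 2 := by positivity
  rw [pkAux_repr t k x, abs_mul, abs_of_nonneg (Real.rpow_nonneg hpos.le _)]
  have h1 := pkAux_eval_le t k x
  have h2 := pkAux_sum_bound t k
  have hA0 := pkAux_sum_nonneg t k
  have hr1 : (0:ℝ) ≤ (1 + x ^ 2) ^ ((k : ℝ) / 2) := Real.rpow_nonneg hpos.le _
  have hr2 : (0:ℝ) ≤ (1 + x ^ 2) ^ (t / 2 - k) := Real.rpow_nonneg hpos.le _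
  have hcomb : (1 + x ^ 2) ^ ((k : ℝ) / 2) * (1 + x ^ 2) ^ (t / 2 - (k:ℝ))
      = (1 + x ^ 2) ^ ((t - k) / 2) := by
    rw [← Real.rpow_add hpos]
    congr 1
    ring
  calc |(pkAux t k).eval x| * (1 + x ^ 2) ^ (t / 2 - (k:ℝ))
      ≤ ((∑ j ∈ range (k + 1), |(pkAux t k).coeff j|) * (1 + x ^ 2) ^ ((k : ℝ) / 2))
          * (1 + x ^ 2) ^ (t / 2 - (k:ℝ)) := mul_le_mul_of_nonneg_right h1 hr2
    _ = (∑ j ∈ range (k + 1), |(pkAux t k).coeff j|) * (1 + x ^ 2) ^ ((t - k) / 2) := by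
        rw [mul_assoc, hcomb]
    _ ≤ (2 ^ (Nat.ceil |t|) * 8 ^ k * (Nat.factorial k : ℝ)) * (1 + x ^ 2) ^ ((t - k) / 2) := by
        apply mul_le_mul_of_nonneg_right h2 (Real.rpow_nonneg hpos.le _)
    _ = 2 ^ (Nat.ceil |t|) * 2 ^ (3 * k) * (Nat.factorial k : ℝ)
          * (1 + x ^ 2) ^ ((t - k) / 2) := by
        rw [pow_mul]
        norm_num
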